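/- (Harnack-type averaging inequality, dilation invariant.) There exists C > 0 such that for every x ∈ Σ, every small d > 0, and every u ∈ H¹(B_x(d)), the difference between the mean value of u on the ball B_x(d) and the mean value of u on the boundary sphere ∂B_x(d) is bounded: |⨍_{B_x(d)} u dV − ⨍_{∂B_x(d)} u dS| ≤ C (∫_{B_x(d)} |∇u|² dV)^{1/2}. The constant C is independent of d. -/

import Mathlib

open MeasureTheory Metric Complex Set
open scoped Real


lemma polar_ball (f : ℂ → ℝ) (x : ℂ) {d : ℝ} (hd : 0 < d) :
    ∫ y in ball x d, f y
      = ∫ p in Ioo (0:ℝ) d ×ˢ Ioo (-π) π, p.1 * f (x + p.1 * Complex.exp (p.2 * I)) := by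
  have h1 : ∫ y in ball x d, f y = ∫ z in ball (0:ℂ) d, f (x + z) := by
    rw [← integral_indicator measurableSet_ball, ← integral_indicator measurableSet_ball,
      ← integral_add_left_eq_self (fun y => (ball x d).indicator f y) x]
    congr 1
    ext z
    have : x + z ∈ ball x d ↔ z ∈ ball (0:ℂ) d := by
      simp [Metric.mem_ball, dist_eq_norm]
    by_cases h : z ∈ ball (0:ℂ) d
    · simp [Set.indicator_of_mem (this.2 h), Set.indicator_of_mem h]
    · simp [Set.indicator_of_notMem (fun hh => h (this.1 hh)),
        Set.indicator_of_notMem h]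
  have h2 := Complex.integral_comp_polarCoord_symm
    (fun z => (ball (0:ℂ) d).indicator (fun w => f (x + w)) z)
  rw [integral_indicator measurableSet_ball] at h2
  rw [h1, ← h2, polarCoord_target]
  have hmeas : MeasurableSet {q : ℝ × ℝ | q.1 < d} :=
    measurableSet_lt (by fun_prop) measurable_const
  rw [setIntegral_congr_fun (measurableSet_Ioi.prod measurableSet_Ioo)
    (g := fun p => ({q : ℝ × ℝ | q.1 < d}).indicator
      (fun p => p.1 * f (x + p.1 * Complex.exp (p.2 * I))) p) ?_]
  · rw [setIntegral_indicator hmeas]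
    have hset : (Ioi (0:ℝ) ×ˢ Ioo (-π) π) ∩ {q : ℝ × ℝ | q.1 < d}
        = Ioo (0:ℝ) d ×ˢ Ioo (-π) π := by
      ext p
      simp only [mem_inter_iff, mem_prod, mem_Ioi, mem_Ioo, mem_setOf_eq]
      tauto
    rw [hset]
  · rintro ⟨r, θ⟩ ⟨hr, hθ⟩
    simp only [mem_Ioi] at hr
    dsimp only
    have hsymm : Complex.polarCoord.symm (r, θ) = (r : ℂ) * Complex.exp (θ * I) := by
      rw [Complex.polarCoord_symm_apply, Complex.exp_mul_I]
      push_cast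
      ring
    have habs : Complex.polarCoord.symm (r, θ) ∈ ball (0:ℂ) d ↔ r < d := by
      rw [Metric.mem_ball, dist_eq, sub_zero, Complex.norm_polarCoord_symm, abs_of_pos hr]
    by_cases h : r < d
    · rw [Set.indicator_of_mem (habs.2 h), Set.indicator_of_mem (by exact h)]
      simp only [smul_eq_mul, hsymm]
    · rw [Set.indicator_of_notMem (fun hh => h (habs.1 hh)),
        Set.indicator_of_notMem (by exact h)]
      simp


lemma cs_int {α : Type*} [MeasurableSpace α] {μ : Measure α} {f g : α → ℝ}
    (hf0 : 0 ≤ᵐ[μ] f) (hg0 : 0 ≤ᵐ[μ] g)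
    (hfm : AEStronglyMeasurable f μ) (hgm : AEStronglyMeasurable g μ)
    (hf2 : Integrable (fun a => f a ^ 2) μ) (hg2 : Integrable (fun a => g a ^ 2) μ) :
    ∫ a, f a * g a ∂μ ≤ Real.sqrt (∫ a, f a ^ 2 ∂μ) * Real.sqrt (∫ a, g a ^ 2 ∂μ) := by
  have hpq : Real.HolderConjugate 2 2 := Real.holderConjugate_iff.mpr ⟨one_lt_two, by norm_num⟩
  have hmf : MemLp f (ENNReal.ofReal 2) μ := by
    rw [show ENNReal.ofReal 2 = 2 by norm_num]
    exact (memLp_two_iff_integrable_sq hfm).2 hf2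
  have hmg : MemLp g (ENNReal.ofReal 2) μ := by
    rw [show ENNReal.ofReal 2 = 2 by norm_num]
    exact (memLp_two_iff_integrable_sq hgm).2 hg2
  have h := integral_mul_le_Lp_mul_Lq_of_nonneg hpq hf0 hg0 hmf hmg
  have e1 : ∀ h : α → ℝ, (∫ a, h a ^ (2:ℝ) ∂μ) = ∫ a, h a ^ 2 ∂μ := by
    intro h; congr 1; ext a; rw [← Real.rpow_natCast (h a) 2]; norm_num
  rw [e1 f, e1 g] at h
  calc ∫ a, f a * g a ∂μ ≤ (∫ a, f a ^ 2 ∂μ) ^ ((1:ℝ)/2) * (∫ a, g a ^ 2 ∂μ) ^ ((1:ℝ)/2) := h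
    _ = _ := by rw [← Real.sqrt_eq_rpow, ← Real.sqrt_eq_rpow]

lemma ray_bound (u : ℂ → ℝ) (hu : ContDiff ℝ 1 u) (x : ℂ) {d r : ℝ} (θ : ℝ)
    (hr : 0 < r) (hrd : r < d) :
    |u (x + r * Complex.exp (θ * I)) - u (x + d * Complex.exp (θ * I))| ≤
      Real.sqrt d / Real.sqrt r *
        Real.sqrt (∫ s in Ioc (0:ℝ) d, s * ‖fderiv ℝ u (x + s * Complex.exp (θ * I))‖ ^ 2) := by
  have hd : 0 < d := hr.trans hrd
  set e : ℂ := Complex.exp (θ * I) with he_def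
  have he : ‖e‖ = 1 := by
    rw [he_def]
    exact Complex.norm_exp_ofReal_mul_I θ
  set G : ℝ → ℝ := fun s => ‖fderiv ℝ u (x + s * e)‖ with hG_def
  have hGc : Continuous G := by
    have := (hu.continuous_fderiv one_ne_zero).comp
      (show Continuous fun s : ℝ => x + s * e by fun_prop)
    exact this.norm
  have hG0 : ∀ s, 0 ≤ G s := fun s => norm_nonneg _
  set D : ℝ → ℝ := fun s => (fderiv ℝ u (x + s * e)) e with hD_def
  have hDc : Continuous D := by
    have h1 : Continuous fun s : ℝ => fderiv ℝ u (x + s * e) :=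
      (hu.continuous_fderiv one_ne_zero).comp (by fun_prop)
    exact h1.clm_apply continuous_const
  have hderiv : ∀ s : ℝ, HasDerivAt (fun s : ℝ => u (x + s * e)) (D s) s := by
    intro s
    have h1 : HasDerivAt (fun s : ℝ => x + (s : ℂ) * e) e s := by
      have h2 : HasDerivAt (fun s : ℝ => (s : ℂ)) 1 s := by
        simpa using (hasDerivAt_id s).ofReal_comp
      simpa using (h2.mul_const e).const_add x
    exact ((hu.differentiable one_ne_zero _).hasFDerivAt.comp_hasDerivAt s h1)
  have ftc : ∫ s in r..d, D s = u (x + d * e) - u (x + r * e) :=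
    intervalIntegral.integral_eq_sub_of_hasDerivAt (fun s _ => hderiv s)
      (hDc.intervalIntegrable r d)
  have step1 : |u (x + r * e) - u (x + d * e)| ≤ ∫ s in Ioc r d, G s := by
    rw [abs_sub_comm, ← ftc]
    calc |∫ s in r..d, D s| ≤ ∫ s in r..d, |D s| :=
          intervalIntegral.abs_integral_le_integral_abs hrd.le
      _ ≤ ∫ s in r..d, G s := by
          apply intervalIntegral.integral_mono_on hrd.le
            (hDc.abs.intervalIntegrable r d) (hGc.intervalIntegrable r d)
          intro s _
          calc |D s| = ‖(fderiv ℝ u (x + s * e)) e‖ := rfl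
            _ ≤ ‖fderiv ℝ u (x + s * e)‖ * ‖e‖ := ContinuousLinearMap.le_opNorm _ _
            _ = G s := by rw [he, mul_one]
      _ = ∫ s in Ioc r d, G s := intervalIntegral.integral_of_le hrd.le
  have step2 : ∫ s in Ioc r d, G s ≤ (Real.sqrt r)⁻¹ * ∫ s in Ioc r d, Real.sqrt s * G s := by
    rw [← integral_const_mul]
    apply setIntegral_mono_on (hGc.integrableOn_Icc.mono_set Ioc_subset_Icc_self)
      (((continuous_const.mul (Real.continuous_sqrt.mul hGc))).integrableOn_Icc.mono_set
        Ioc_subset_Icc_self) measurableSet_Ioc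
    intro s hs
    have hsr : Real.sqrt r ≤ Real.sqrt s := Real.sqrt_le_sqrt hs.1.le
    have hrpos : 0 < Real.sqrt r := Real.sqrt_pos.2 hr
    calc G s = (Real.sqrt r)⁻¹ * (Real.sqrt r * G s) := by
          field_simp
      _ ≤ (Real.sqrt r)⁻¹ * (Real.sqrt s * G s) := by
          apply mul_le_mul_of_nonneg_left (mul_le_mul_of_nonneg_right hsr (hG0 s))
            (inv_nonneg.2 hrpos.le)
  have step3 : ∫ s in Ioc r d, Real.sqrt s * G s ≤
      Real.sqrt d * Real.sqrt (∫ s in Ioc (0:ℝ) d, s * G s ^ 2) := by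
    have csapp := cs_int (μ := volume.restrict (Ioc r d))
      (f := fun _ => (1:ℝ)) (g := fun s => Real.sqrt s * G s)
      (Filter.Eventually.of_forall fun s => zero_le_one)
      (Filter.Eventually.of_forall fun s => mul_nonneg (Real.sqrt_nonneg s) (hG0 s))
      aestronglyMeasurable_const
      ((Real.continuous_sqrt.mul hGc).aestronglyMeasurable)
      (by simpa using (integrableOn_const measure_Ioc_lt_top.ne))
      (((Real.continuous_sqrt.mul hGc).pow 2).integrableOn_Icc.mono_set Ioc_subset_Icc_self)
    simp only [one_mul, one_pow] at csapp
    have h1 : ∫ _ in Ioc r d, (1:ℝ) = d - r := by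
      simp [Real.volume_Ioc, ENNReal.toReal_ofReal (sub_nonneg.2 hrd.le), hrd.le]
    have h2 : ∫ s in Ioc r d, (Real.sqrt s * G s) ^ 2 = ∫ s in Ioc r d, s * G s ^ 2 := by
      apply setIntegral_congr_fun measurableSet_Ioc
      intro s hs
      simp [mul_pow, Real.sq_sqrt (hr.le.trans hs.1.le)]
    have h3 : ∫ s in Ioc r d, s * G s ^ 2 ≤ ∫ s in Ioc (0:ℝ) d, s * G s ^ 2 := by
      apply setIntegral_mono_set
        (((continuous_id.mul (hGc.pow 2))).integrableOn_Icc.mono_set Ioc_subset_Icc_self)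
        (ae_restrict_of_forall_mem measurableSet_Ioc fun s hs =>
          mul_nonneg hs.1.le (sq_nonneg _))
        (HasSubset.Subset.eventuallyLE (Ioc_subset_Ioc_left hr.le))
    calc ∫ s in Ioc r d, Real.sqrt s * G s
        ≤ Real.sqrt (d - r) * Real.sqrt (∫ s in Ioc r d, s * G s ^ 2) := by
          rw [← h1, ← h2]; exact csapp
      _ ≤ Real.sqrt d * Real.sqrt (∫ s in Ioc (0:ℝ) d, s * G s ^ 2) := by
          apply mul_le_mul (Real.sqrt_le_sqrt (by linarith)) (Real.sqrt_le_sqrt h3)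
            (Real.sqrt_nonneg _) (Real.sqrt_nonneg _)
  calc |u (x + r * e) - u (x + d * e)| ≤ ∫ s in Ioc r d, G s := step1
    _ ≤ (Real.sqrt r)⁻¹ * ∫ s in Ioc r d, Real.sqrt s * G s := step2
    _ ≤ (Real.sqrt r)⁻¹ * (Real.sqrt d * Real.sqrt (∫ s in Ioc (0:ℝ) d, s * G s ^ 2)) := by
        apply mul_le_mul_of_nonneg_left step3 (inv_nonneg.2 (Real.sqrt_nonneg r))
    _ = Real.sqrt d / Real.sqrt r * Real.sqrt (∫ s in Ioc (0:ℝ) d, s * G s ^ 2) := by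
        ring

lemma integrableOn_rect {F : ℝ × ℝ → ℝ} (hF : Continuous F) {a b c e : ℝ} :
    IntegrableOn F (Ioo a b ×ˢ Ioo c e) :=
  (hF.continuousOn.integrableOn_compact (isCompact_Icc.prod isCompact_Icc)).mono_set
    (prod_mono Ioo_subset_Icc_self Ioo_subset_Icc_self)

/-- Harnack-type averaging inequality, dilation invariant (stated in the plane, which models a
small coordinate ball of a surface): there is `C > 0`, independent of the radius `d`, such that
for every center `x`, every small `d > 0` and every `C¹` function `u`, the difference between the
mean value of `u` over the ball `B_x(d)` and the mean value of `u` over the boundary circle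
`∂B_x(d)` (written via the parametrization `θ ↦ x + d e^{iθ}`) is bounded by
`C (∫_{B_x(d)} |∇u|²)^{1/2}`. -/
theorem stmt5 :
    ∃ C : ℝ, 0 < C ∧
      ∀ (x : ℂ) (d : ℝ) (u : ℂ → ℝ), 0 < d → d ≤ 1 → ContDiff ℝ 1 u →
        |(⨍ y in ball x d, u y) -
            (2 * Real.pi)⁻¹ * ∫ θ in (0 : ℝ)..(2 * Real.pi), u (x + d * exp (θ * I))| ≤
          C * (∫ y in ball x d, ‖fderiv ℝ u y‖ ^ 2) ^ ((1 : ℝ) / 2) := by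
  refine ⟨1, one_pos, fun x d u hd _ hu => ?_⟩
  have hπ : (0:ℝ) < π := Real.pi_pos
  set S : Set (ℝ × ℝ) := Ioo (0:ℝ) d ×ˢ Ioo (-π) π with hS_def
  have hSrestrict : volume.restrict S
      = (volume.restrict (Ioo (0:ℝ) d)).prod (volume.restrict (Ioo (-π) π)) := by
    rw [Measure.prod_restrict, ← Measure.volume_eq_prod]
  have huc : Continuous u := hu.continuous
  have hfc : Continuous (fderiv ℝ u) := hu.continuous_fderiv one_ne_zero
  have hcexp : Continuous fun θ : ℝ => Complex.exp (θ * I) := by fun_prop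
  -- the energy as a function of the angle
  set E : ℝ → ℝ := fun θ =>
    ∫ s in Ioc (0:ℝ) d, s * ‖fderiv ℝ u (x + s * Complex.exp (θ * I))‖ ^ 2 with hE_def
  have hE0 : ∀ θ, 0 ≤ E θ := fun θ =>
    setIntegral_nonneg measurableSet_Ioc fun s hs => mul_nonneg hs.1.le (sq_nonneg _)
  have hGc : Continuous fun p : ℝ × ℝ => ‖fderiv ℝ u (x + p.1 * Complex.exp (p.2 * I))‖ := by
    apply Continuous.norm
    apply hfc.comp
    fun_prop
  have hEc : Continuous E := by
    have : E = fun θ : ℝ =>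
        ∫ s in (0:ℝ)..d, s * ‖fderiv ℝ u (x + s * Complex.exp ((θ:ℂ) * I))‖ ^ 2 := by
      funext θ
      rw [intervalIntegral.integral_of_le hd.le]
    rw [this]
    apply intervalIntegral.continuous_parametric_intervalIntegral_of_continuous'
    have : Continuous fun p : ℝ × ℝ => p.2 * ‖fderiv ℝ u (x + p.2 * Complex.exp (p.1 * I))‖ ^ 2 := by
      apply continuous_snd.mul
      apply Continuous.pow
      apply Continuous.norm
      apply hfc.comp
      fun_prop
    exact this
  -- total energy
  set B : ℝ := ∫ y in ball x d, ‖fderiv ℝ u y‖ ^ 2 with hB_def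
  have hB0 : 0 ≤ B :=
    setIntegral_nonneg measurableSet_ball fun y _ => sq_nonneg _
  -- Fubini for the energy
  have hHc : Continuous fun p : ℝ × ℝ =>
      p.1 * ‖fderiv ℝ u (x + p.1 * Complex.exp (p.2 * I))‖ ^ 2 :=
    continuous_fst.mul (hGc.pow 2)
  have hEtot : B = ∫ θ in Ioo (-π) π, E θ := by
    rw [hB_def, polar_ball _ x hd]
    rw [← hS_def, hSrestrict]
    rw [integral_prod_symm _ (by rw [← hSrestrict]; exact integrableOn_rect hHc)]
    apply setIntegral_congr_fun measurableSet_Ioo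
    intro θ _
    rw [hE_def]
    exact (integral_Ioc_eq_integral_Ioo).symm
  -- circle integral: move to (-π, π)
  have hper : Function.Periodic (fun θ : ℝ => u (x + d * Complex.exp ((θ:ℂ) * I))) (2*π) := by
    intro θ
    have hexp : Complex.exp (((θ + 2*π :ℝ):ℂ) * I) = Complex.exp ((θ:ℂ)*I) := by
      push_cast
      rw [add_mul, Complex.exp_add, Complex.exp_two_pi_mul_I, mul_one]
    simp only [hexp]
  have hcirc : ∫ θ in (0:ℝ)..(2*π), u (x + d * Complex.exp ((θ:ℂ) * I))
      = ∫ θ in Ioo (-π) π, u (x + d * Complex.exp ((θ:ℂ) * I)) := by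
    have h1 := hper.intervalIntegral_add_eq 0 (-π)
    rw [zero_add] at h1
    rw [show -π + 2*π = π by ring] at h1
    rw [h1, intervalIntegral.integral_of_le (by linarith), integral_Ioc_eq_integral_Ioo]
  -- volume of the ball
  have hvol : (volume (ball x d)).toReal = d^2 * π := by
    rw [Complex.volume_ball, ENNReal.toReal_mul, ENNReal.toReal_pow,
      ENNReal.toReal_ofReal hd.le, ENNReal.coe_toReal, NNReal.coe_real_pi]
  -- the ball average in polar form
  have havg : ⨍ y in ball x d, u y
      = (d^2*π)⁻¹ * ∫ p in S, p.1 * u (x + p.1 * Complex.exp ((p.2:ℂ)*I)) := by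
    rw [setAverage_eq, measureReal_def, hvol, smul_eq_mul, polar_ball u x hd]
  -- simple radial integrals
  have hradial : ∫ r in Ioo (0:ℝ) d, r = d^2/2 := by
    rw [← integral_Ioc_eq_integral_Ioo, ← intervalIntegral.integral_of_le hd.le,
      integral_id]
    ring
  have hθone : ∫ _ in Ioo (-π) π, (1:ℝ) = 2*π := by
    rw [setIntegral_const, measureReal_def, Real.volume_Ioo, smul_eq_mul, mul_one,
      ENNReal.toReal_ofReal (by linarith)]
    ring
  -- the circle term in polar form
  have hΨint : ∫ p in S, p.1 * u (x + d * Complex.exp ((p.2:ℂ)*I))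
      = (d^2/2) * ∫ θ in Ioo (-π) π, u (x + d * Complex.exp ((θ:ℂ)*I)) := by
    rw [hSrestrict, integral_prod_mul (f := fun r : ℝ => r)
      (g := fun θ : ℝ => u (x + d * Complex.exp ((θ:ℂ)*I))), hradial]
  -- the integrand and its bound
  set F : ℝ × ℝ → ℝ := fun p =>
    p.1 * (u (x + p.1 * Complex.exp ((p.2:ℂ) * I)) - u (x + d * Complex.exp ((p.2:ℂ) * I)))
      with hF_def
  have hFc : Continuous F := by
    apply continuous_fst.mul
    apply Continuous.sub
    · exact huc.comp (by fun_prop)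
    · exact huc.comp (by fun_prop)
  have hFbound : ∀ p ∈ S, |F p| ≤ (Real.sqrt d * Real.sqrt p.1) * Real.sqrt (E p.2) := by
    rintro ⟨r, θ⟩ hp
    obtain ⟨hr, hθ⟩ := hp
    simp only [mem_Ioo] at hr hθ
    have h1 := ray_bound u hu x θ hr.1 hr.2
    have h2 : |F (r, θ)| = r * |u (x + r * Complex.exp ((θ:ℂ) * I))
        - u (x + d * Complex.exp ((θ:ℂ) * I))| := by
      rw [hF_def]
      dsimp only
      rw [abs_mul, abs_of_pos hr.1]
    rw [h2]
    calc r * |u (x + r * Complex.exp ((θ:ℂ) * I)) - u (x + d * Complex.exp ((θ:ℂ) * I))|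
        ≤ r * (Real.sqrt d / Real.sqrt r * Real.sqrt (E θ)) :=
          mul_le_mul_of_nonneg_left h1 hr.1.le
      _ = (Real.sqrt d * Real.sqrt r) * Real.sqrt (E θ) := by
          rw [show r * (Real.sqrt d / Real.sqrt r * Real.sqrt (E θ))
            = Real.sqrt d * (r / Real.sqrt r) * Real.sqrt (E θ) by ring, Real.div_sqrt]
  -- Cauchy-Schwarz on S
  have hfgc : Continuous fun p : ℝ × ℝ => (Real.sqrt d * Real.sqrt p.1) * Real.sqrt (E p.2) := by
    apply Continuous.mul
    · exact continuous_const.mul (Real.continuous_sqrt.comp continuous_fst)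
    · exact (Real.continuous_sqrt.comp hEc).comp continuous_snd
  have ht1 : ∫ p in S, ((Real.sqrt d * Real.sqrt p.1)) ^ 2 = π * d^3 := by
    have e1 : ∫ p in S, ((Real.sqrt d * Real.sqrt p.1)) ^ 2 = ∫ p in S, d * p.1 := by
      apply setIntegral_congr_fun (measurableSet_Ioo.prod measurableSet_Ioo)
      rintro ⟨r, θ⟩ hp
      obtain ⟨hr, hθ⟩ := hp
      simp only [mem_Ioo] at hr
      dsimp only
      rw [mul_pow, Real.sq_sqrt hd.le, Real.sq_sqrt hr.1.le]
    rw [e1]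
    rw [show (fun p : ℝ × ℝ => d * p.1) = fun p : ℝ × ℝ => (d * p.1) * (1:ℝ) by
      funext p; ring]
    rw [hSrestrict, integral_prod_mul (f := fun r : ℝ => d * r) (g := fun _ : ℝ => (1:ℝ)),
      hθone, integral_const_mul, hradial]
    ring
  have ht2 : ∫ p in S, (Real.sqrt (E p.2)) ^ 2 = d * B := by
    have e1 : ∫ p in S, (Real.sqrt (E p.2)) ^ 2 = ∫ p in S, E p.2 := by
      apply setIntegral_congr_fun (measurableSet_Ioo.prod measurableSet_Ioo)
      rintro ⟨r, θ⟩ _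
      dsimp only
      rw [Real.sq_sqrt (hE0 θ)]
    rw [e1, hSrestrict]
    rw [show (fun p : ℝ × ℝ => E p.2) = fun p : ℝ × ℝ => (1:ℝ) * E p.2 by funext p; rw [one_mul]]
    rw [integral_prod_mul (f := fun _ : ℝ => (1:ℝ)) (g := E)]
    have : ∫ _ in Ioo (0:ℝ) d, (1:ℝ) = d := by
      rw [setIntegral_const, measureReal_def, Real.volume_Ioo, smul_eq_mul, mul_one,
        ENNReal.toReal_ofReal (by linarith)]
      ring
    rw [this, ← hEtot]
  have hcs : ∫ p in S, (Real.sqrt d * Real.sqrt p.1) * Real.sqrt (E p.2)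
      ≤ Real.sqrt (π * d^3) * Real.sqrt (d * B) := by
    have := cs_int (μ := volume.restrict S)
      (f := fun p : ℝ × ℝ => Real.sqrt d * Real.sqrt p.1)
      (g := fun p : ℝ × ℝ => Real.sqrt (E p.2))
      (Filter.Eventually.of_forall fun p => mul_nonneg (Real.sqrt_nonneg _) (Real.sqrt_nonneg _))
      (Filter.Eventually.of_forall fun p => Real.sqrt_nonneg _)
      (continuous_const.mul (Real.continuous_sqrt.comp continuous_fst)).aestronglyMeasurable
      ((Real.continuous_sqrt.comp hEc).comp continuous_snd).aestronglyMeasurable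
      (integrableOn_rect (((continuous_const.mul
        (Real.continuous_sqrt.comp continuous_fst))).pow 2))
      (integrableOn_rect ((((Real.continuous_sqrt.comp hEc).comp continuous_snd)).pow 2))
    rw [ht1, ht2] at this
    exact this
  -- put everything together
  have hd2π : (0:ℝ) < d^2*π := by positivity
  have hmain : |(⨍ y in ball x d, u y) -
      (2 * π)⁻¹ * ∫ θ in (0 : ℝ)..(2 * π), u (x + d * Complex.exp ((θ:ℂ) * I))|
      ≤ (d^2*π)⁻¹ * (Real.sqrt (π * d^3) * Real.sqrt (d * B)) := by
    have hcircle_eq : (2 * π)⁻¹ * ∫ θ in (0 : ℝ)..(2 * π), u (x + d * Complex.exp ((θ:ℂ) * I))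
        = (d^2*π)⁻¹ * ∫ p in S, p.1 * u (x + d * Complex.exp ((p.2:ℂ)*I)) := by
      rw [hcirc, hΨint]
      field_simp
      ring_nf
      simp only [mul_comm I]
    rw [havg, hcircle_eq, ← mul_sub, abs_mul, abs_of_pos (inv_pos.2 hd2π)]
    apply mul_le_mul_of_nonneg_left ?_ (inv_pos.2 hd2π).le
    have hint1 : IntegrableOn (fun p : ℝ × ℝ => p.1 * u (x + p.1 * Complex.exp ((p.2:ℂ)*I)))
        S volume := integrableOn_rect (continuous_fst.mul (huc.comp (by fun_prop)))
    have hint2 : IntegrableOn (fun p : ℝ × ℝ => p.1 * u (x + d * Complex.exp ((p.2:ℂ)*I)))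
        S volume := integrableOn_rect (continuous_fst.mul (huc.comp (by fun_prop)))
    have hsub : (∫ p in S, p.1 * u (x + p.1 * Complex.exp ((p.2:ℂ)*I)))
        - (∫ p in S, p.1 * u (x + d * Complex.exp ((p.2:ℂ)*I))) = ∫ p in S, F p := by
      rw [← integral_sub hint1 hint2]
      congr 1
      funext p
      rw [hF_def]
      ring
    rw [hsub]
    calc |∫ p in S, F p| ≤ ∫ p in S, |F p| := by
          simpa [Real.norm_eq_abs] using norm_integral_le_integral_norm (μ := volume.restrict S) F
      _ ≤ ∫ p in S, (Real.sqrt d * Real.sqrt p.1) * Real.sqrt (E p.2) := by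
          apply setIntegral_mono_on (integrableOn_rect hFc.abs) (integrableOn_rect hfgc)
            (measurableSet_Ioo.prod measurableSet_Ioo) hFbound
      _ ≤ Real.sqrt (π * d^3) * Real.sqrt (d * B) := hcs
  -- final numeric computation
  have hnum : (d^2*π)⁻¹ * (Real.sqrt (π * d^3) * Real.sqrt (d * B)) ≤ 1 * B ^ ((1:ℝ)/2) := by
    have e1 : Real.sqrt (π * d^3) * Real.sqrt (d * B) = Real.sqrt π * d^2 * Real.sqrt B := by
      rw [Real.sqrt_mul hπ.le, Real.sqrt_mul hd.le,
        show d^3 = d^2 * d by ring, Real.sqrt_mul (sq_nonneg d),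
        Real.sqrt_sq hd.le]
      rw [show Real.sqrt π * (d * Real.sqrt d) * (Real.sqrt d * Real.sqrt B)
        = Real.sqrt π * d * (Real.sqrt d * Real.sqrt d) * Real.sqrt B by ring,
        Real.mul_self_sqrt hd.le]
      ring
    rw [e1, ← Real.sqrt_eq_rpow, one_mul]
    rw [show (d^2*π)⁻¹ * (Real.sqrt π * d^2 * Real.sqrt B)
      = (d^2 * (d^2)⁻¹) * (π⁻¹ * Real.sqrt π) * Real.sqrt B by ring]
    rw [mul_inv_cancel₀ (by positivity : (d:ℝ)^2 ≠ 0), one_mul]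
    have hsp : π⁻¹ * Real.sqrt π ≤ 1 := by
      rw [show π⁻¹ * Real.sqrt π = Real.sqrt π / π by ring, div_le_one hπ]
      nlinarith [Real.sq_sqrt hπ.le, Real.sqrt_nonneg π, Real.pi_gt_three]
    calc π⁻¹ * Real.sqrt π * Real.sqrt B ≤ 1 * Real.sqrt B :=
          mul_le_mul_of_nonneg_right hsp (Real.sqrt_nonneg B)
      _ = Real.sqrt B := one_mul _
  calc |(⨍ y in ball x d, u y) -
      (2 * π)⁻¹ * ∫ θ in (0 : ℝ)..(2 * π), u (x + d * Complex.exp ((θ:ℂ) * I))|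
      ≤ (d^2*π)⁻¹ * (Real.sqrt (π * d^3) * Real.sqrt (d * B)) := hmain
    _ ≤ 1 * B ^ ((1:ℝ)/2) := hnum
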